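/- One has k(X)^d ∩ k(X)^E = k if and only if n is a prime number. That is, the only rational functions that are simultaneously constants of the cyclotomic derivation d and homogeneous of degree zero are the elements of k, exactly when n is prime. -/

import Mathlib

open MvPolynomial Finset

set_option maxHeartbeats 1000000
set_option synthInstance.maxHeartbeats 400000


section chi
variable {k : Type*} [Field k] {n : ℕ} {ε : k}

/-- the character `t ↦ ε^t` on `ZMod n`. -/
noncomputable def chi (ε : k) (n : ℕ) : ZMod n → k := fun t => ε ^ t.val

lemma pow_val_mod (hεn : ε ^ n = 1) (m : ℕ) : ε ^ (m % n) = ε ^ m := by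
  conv_rhs => rw [← Nat.div_add_mod m n, pow_add, pow_mul, hεn, one_pow, one_mul]

lemma chi_add [NeZero n] (hεn : ε ^ n = 1) (s t : ZMod n) :
    chi ε n (s + t) = chi ε n s * chi ε n t := by
  unfold chi
  rw [ZMod.val_add, pow_val_mod hεn, pow_add]

lemma chi_zero [NeZero n] : chi ε n 0 = 1 := by simp [chi]

lemma eps_ne_zero (hn : n ≠ 0) (hεn : ε ^ n = 1) : ε ≠ 0 := by
  rintro rfl
  rw [zero_pow hn] at hεn
  exact zero_ne_one hεn

lemma chi_ne_zero (hn : n ≠ 0) (hεn : ε ^ n = 1) (t : ZMod n) : chi ε n t ≠ 0 :=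
  pow_ne_zero _ (eps_ne_zero hn hεn)

lemma chi_ne_one [NeZero n] (hε : IsPrimitiveRoot ε n) {t : ZMod n} (ht : t ≠ 0) :
    chi ε n t ≠ 1 := by
  have h1 : 0 < t.val := by
    rcases Nat.eq_zero_or_pos t.val with h | h
    · exact absurd (by rw [← ZMod.natCast_zmod_val t, h, Nat.cast_zero]) ht
    · exact h
  exact hε.pow_ne_one_of_pos_of_lt h1.ne' (ZMod.val_lt t)

lemma chi_neg_mul [NeZero n] (hεn : ε ^ n = 1) (t : ZMod n) :
    chi ε n (-t) * chi ε n t = 1 := by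
  rw [← chi_add hεn, neg_add_cancel, chi_zero]

lemma chi_orth [NeZero n] (hε : IsPrimitiveRoot ε n) {t : ZMod n} (ht : t ≠ 0) :
    ∑ j : ZMod n, chi ε n (j * t) = 0 := by
  have hεn := hε.pow_eq_one
  have key : chi ε n t * ∑ j : ZMod n, chi ε n (j * t) = ∑ j : ZMod n, chi ε n (j * t) := by
    rw [Finset.mul_sum]
    refine Fintype.sum_bijective (· + (1 : ZMod n)) (Equiv.addRight (1:ZMod n)).bijective _ _
      fun j => ?_
    rw [← chi_add hεn, add_mul, one_mul, add_comm]
  by_contra h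
  nth_rewrite 2 [← one_mul (∑ j : ZMod n, chi ε n (j * t))] at key
  exact chi_ne_one hε ht (mul_right_cancel₀ h key)

lemma chi_sum_eq (hε : IsPrimitiveRoot ε n) [NeZero n] (t : ZMod n) :
    ∑ j : ZMod n, chi ε n (j * t) = if t = 0 then (n : k) else 0 := by
  split_ifs with h
  · subst h; simp only [mul_zero, chi_zero]
    simp [ZMod.card]
  · exact chi_orth hε h

end chi



section uv
variable {k : Type*} [Field k] [CharZero k] {n : ℕ} (ε : k) [NeZero n]

noncomputable def uu (n : ℕ) [NeZero n] : ZMod n → MvPolynomial (ZMod n) k :=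
  fun i => ∑ j : ZMod n, chi ε n (i * j) • X j

noncomputable def vv (n : ℕ) [NeZero n] : ZMod n → MvPolynomial (ZMod n) k :=
  fun j => (n : k)⁻¹ • ∑ i : ZMod n, chi ε n (-(i * j)) • X i

variable {ε} (hε : IsPrimitiveRoot ε n)

include hε in
lemma aeval_uu_vv (j : ZMod n) : aeval (uu ε n) (vv ε n j) = X j := by
  have hεn := hε.pow_eq_one
  have hchar : (n : k) ≠ 0 := Nat.cast_ne_zero.mpr (NeZero.ne n)
  have step1 : aeval (uu ε n) (vv ε n j)
      = (n : k)⁻¹ • ∑ i : ZMod n, ∑ l : ZMod n,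
          (chi ε n (-(i * j)) * chi ε n (i * l)) • X l := by
    simp only [vv, map_smul, map_sum, aeval_X, uu, smul_sum, smul_smul]
    refine Finset.sum_congr rfl fun a _ => Finset.sum_congr rfl fun b _ => ?_
    congr 1
    ring
  rw [step1, Finset.sum_comm]
  have step2 : ∀ l : ZMod n, ∑ i : ZMod n,
      (chi ε n (-(i * j)) * chi ε n (i * l)) • (X l : MvPolynomial (ZMod n) k)
      = (if l = j then (n:k) else 0) • X l := by
    intro l
    have : ∀ i : ZMod n, chi ε n (-(i * j)) * chi ε n (i * l) = chi ε n (i * (l - j)) := by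
      intro i
      rw [← chi_add hεn]
      congr 1
      ring
    simp only [this, ← Finset.sum_smul, chi_sum_eq hε, sub_eq_zero]
  simp only [step2, ite_smul, zero_smul, Finset.sum_ite_eq', Finset.mem_univ, if_true,
    smul_smul, inv_mul_cancel₀ hchar, one_smul]

include hε in
lemma aeval_vv_uu (i : ZMod n) : aeval (vv ε n) (uu ε n i) = X i := by
  have hεn := hε.pow_eq_one
  have hchar : (n : k) ≠ 0 := Nat.cast_ne_zero.mpr (NeZero.ne n)
  have step1 : aeval (vv ε n) (uu ε n i)
      = (n : k)⁻¹ • ∑ j : ZMod n, ∑ l : ZMod n,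
          (chi ε n (i * j) * chi ε n (-(l * j))) • X l := by
    simp only [uu, map_sum, map_smul, aeval_X, vv, smul_sum, smul_smul, Finset.smul_sum]
    refine Finset.sum_congr rfl fun a _ => Finset.sum_congr rfl fun b _ => ?_
    congr 1
    ring
  rw [step1, Finset.sum_comm]
  have step2 : ∀ l : ZMod n, ∑ j : ZMod n,
      (chi ε n (i * j) * chi ε n (-(l * j))) • (X l : MvPolynomial (ZMod n) k)
      = (if l = i then (n:k) else 0) • X l := by
    intro l
    have : ∀ j : ZMod n, chi ε n (i * j) * chi ε n (-(l * j)) = chi ε n (j * (i - l)) := by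
      intro j
      rw [← chi_add hεn]
      congr 1
      ring
    simp only [this, ← Finset.sum_smul, chi_sum_eq hε, sub_eq_zero]
    congr 1
    simp only [eq_comm]
  simp only [step2, ite_smul, zero_smul, Finset.sum_ite_eq', Finset.mem_univ, if_true,
    smul_smul, inv_mul_cancel₀ hchar, one_smul]

/-- The diagonalizing `k`-algebra automorphism of the polynomial ring. -/
noncomputable def psiA (hε : IsPrimitiveRoot ε n) :
    MvPolynomial (ZMod n) k ≃ₐ[k] MvPolynomial (ZMod n) k :=
  AlgEquiv.ofAlgHom (aeval (uu ε n)) (aeval (vv ε n))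
    (by
      refine MvPolynomial.algHom_ext fun j => ?_
      simp only [AlgHom.comp_apply, aeval_X, AlgHom.id_apply]
      exact aeval_uu_vv hε j)
    (by
      refine MvPolynomial.algHom_ext fun i => ?_
      simp only [AlgHom.comp_apply, aeval_X, AlgHom.id_apply]
      exact aeval_vv_uu hε i)

include hε in
@[simp] lemma psiA_X (i : ZMod n) : psiA hε (X i) = uu ε n i := by
  simp [psiA, AlgEquiv.ofAlgHom]

include hε in
lemma uu_ne_zero (i : ZMod n) : uu ε n i ≠ 0 := by
  intro h
  have : psiA hε (X i) = 0 := by rw [psiA_X hε, h]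
  exact X_ne_zero i ((map_eq_zero_iff _ (psiA hε).injective).mp this)
end uv


section Dmu
variable {k : Type*} [Field k] {n : ℕ}

/-- weight of a monomial exponent w.r.t. weights `μ`. -/
noncomputable def wt (μ : ZMod n → k) (a : ZMod n →₀ ℕ) : k :=
  a.sum fun i t => (t : k) * μ i

/-- the diagonal derivation with eigenvalue `μ i` on `X i`. -/
noncomputable def Dmu (μ : ZMod n → k) :
    Derivation k (MvPolynomial (ZMod n) k) (MvPolynomial (ZMod n) k) :=
  mkDerivation k (fun i => μ i • X i)

lemma Dmu_X (μ : ZMod n → k) (i : ZMod n) : Dmu μ (X i) = μ i • X i := by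
  simp [Dmu]

lemma Dmu_monomial (μ : ZMod n → k) (s : ZMod n →₀ ℕ) (r : k) :
    Dmu μ (monomial s r) = wt μ s • monomial s r := by
  rw [Dmu, mkDerivation_monomial]
  have h1 : (s.sum fun i t => monomial (s - Finsupp.single i 1) (t : k) • (μ i • X i))
      = s.sum fun i t => monomial s ((t : k) * μ i) := by
    apply Finsupp.sum_congr
    intro i hi
    have hle : Finsupp.single i 1 ≤ s := by
      rw [Finsupp.single_le_iff]
      exact Nat.one_le_iff_ne_zero.mpr (Finsupp.mem_support_iff.mp hi)
    rw [smul_eq_mul, mul_smul_comm, X, monomial_mul, mul_one,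
      tsub_add_cancel_of_le hle, smul_monomial]
    congr 1
    rw [smul_eq_mul]
    ring
  rw [h1, ← map_finsuppSum (monomial s), ← wt, smul_monomial, smul_monomial]
  congr 1
  rw [smul_eq_mul, smul_eq_mul]
  ring

lemma Dmu_eq_sum (μ : ZMod n → k) (R : MvPolynomial (ZMod n) k) :
    Dmu μ R = ∑ a ∈ R.support, wt μ a • monomial a (coeff a R) := by
  conv_lhs => rw [R.as_sum]
  rw [map_sum]
  exact Finset.sum_congr rfl fun a _ => Dmu_monomial μ a _

lemma coeff_Dmu (μ : ZMod n → k) (R : MvPolynomial (ZMod n) k) (b : ZMod n →₀ ℕ) :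
    coeff b (Dmu μ R) = wt μ b * coeff b R := by
  rw [Dmu_eq_sum]
  classical
  simp only [coeff_sum, coeff_smul, coeff_monomial, smul_eq_mul, mul_ite, mul_zero]
  rw [Finset.sum_ite_eq' R.support b (fun a => wt μ a * coeff a R)]
  by_cases hb : b ∈ R.support
  · simp [hb]
  · simp [hb, MvPolynomial.notMem_support_iff.mp hb]
end Dmu



section core
variable {k : Type*} [Field k] {n : ℕ}

local notation "PR" => MvPolynomial (ZMod n) k
local notation "FR" => FractionRing (MvPolynomial (ZMod n) k)

/-- the twisted embedding of the polynomial ring into its fraction field. -/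
noncomputable def algt (ψ : PR ≃ₐ[k] PR) : PR →ₐ[k] FR :=
  (IsScalarTower.toAlgHom k PR FR).comp ψ.toAlgHom

lemma algt_injective (ψ : PR ≃ₐ[k] PR) : Function.Injective (algt ψ) :=
  (IsFractionRing.injective (MvPolynomial (ZMod n) k) FR).comp ψ.injective

lemma d_algt (d : Derivation k FR FR) (μ : ZMod n → k) (ψ : PR ≃ₐ[k] PR)
    (hd : ∀ i, d (algt ψ (X i)) = algebraMap k FR (μ i) * algt ψ (X i)) (R : PR) :
    d (algt ψ R) = algt ψ (Dmu μ R) := by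
  induction R using MvPolynomial.induction_on with
  | C a =>
      rw [show (C a : PR) = algebraMap k PR a from rfl, AlgHom.commutes, Derivation.map_algebraMap,
        Derivation.map_algebraMap, map_zero]
  | add p q hp hq => rw [map_add, map_add, hp, hq, map_add, map_add]
  | mul_X p i hp =>
      have hR : Dmu μ (p * X i) = Dmu μ p * X i + p * (μ i • X i) := by
        rw [Derivation.leibniz, Dmu_X, smul_eq_mul, smul_eq_mul]
        ring
      rw [map_mul, Derivation.leibniz, smul_eq_mul, smul_eq_mul, hp, hd i, hR, map_add,
        map_mul, map_mul, map_smul, Algebra.smul_def]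
      ring

theorem core (ψ : PR ≃ₐ[k] PR) (μ ν : ZMod n → k) (d e : Derivation k FR FR)
    (hd : ∀ i, d (algt ψ (X i)) = algebraMap k FR (μ i) * algt ψ (X i))
    (he : ∀ i, e (algt ψ (X i)) = algebraMap k FR (ν i) * algt ψ (X i))
    (inj : ∀ a b : ZMod n →₀ ℕ, wt μ a = wt μ b → wt ν a = wt ν b → a = b)
    (f : FR) (hdf : d f = 0) (hef : e f = 0) :
    f ∈ Set.range (algebraMap k FR) := by
  classical
  have hex : ∃ m : ℕ, ∃ P Q : PR, Q ≠ 0 ∧ f * algt ψ Q = algt ψ P ∧ Q.support.card = m := by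
    obtain ⟨a, b, hb, rfl⟩ := IsFractionRing.div_surjective (A := MvPolynomial (ZMod n) k) f
    refine ⟨(ψ.symm b).support.card, ψ.symm a, ψ.symm b, ?_, ?_, rfl⟩
    · intro h
      apply nonZeroDivisors.ne_zero hb
      have := congrArg ψ h
      simpa using this
    · have hb0 : algebraMap PR FR b ≠ 0 := by
        rw [map_ne_zero_iff _ (IsFractionRing.injective (MvPolynomial (ZMod n) k) FR)]
        exact nonZeroDivisors.ne_zero hb
      have h1 : algt ψ (ψ.symm b) = algebraMap PR FR b := by simp [algt]
      have h2 : algt ψ (ψ.symm a) = algebraMap PR FR a := by simp [algt]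
      rw [h1, h2, div_mul_cancel₀ _ hb0]
  obtain ⟨P, Q, hQ, hPQ, hcard⟩ := Nat.find_spec hex
  set m₀ := Nat.find hex with hm₀
  obtain ⟨a₀, ha₀⟩ := (MvPolynomial.support_nonempty.mpr hQ : Q.support.Nonempty)
  -- the key reduction: for an eigen-derivation vanishing on f, Q and P are weight-homogeneous
  have key : ∀ (μ' : ZMod n → k) (d' : Derivation k FR FR),
      (∀ R : PR, d' (algt ψ R) = algt ψ (Dmu μ' R)) → d' f = 0 →
      Dmu μ' Q = wt μ' a₀ • Q ∧ Dmu μ' P = wt μ' a₀ • P := by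
    intro μ' d' hcom hdf'
    set c := wt μ' a₀ with hc
    have hmain : f * algt ψ (Dmu μ' Q) = algt ψ (Dmu μ' P) := by
      have h2 := congrArg d' hPQ
      rw [Derivation.leibniz, hdf', smul_zero, add_zero, smul_eq_mul, hcom, hcom] at h2
      exact h2
    have hQhom : Dmu μ' Q = c • Q := by
      by_cases hQ' : Dmu μ' Q - c • Q = 0
      · rw [sub_eq_zero] at hQ'; exact hQ'
      · exfalso
        have hsupp : (Dmu μ' Q - c • Q).support ⊆ Q.support.erase a₀ := by
          intro b hb
          rw [MvPolynomial.mem_support_iff] at hb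
          have hcoeff : coeff b (Dmu μ' Q - c • Q) = (wt μ' b - c) * coeff b Q := by
            rw [coeff_sub, coeff_Dmu, coeff_smul, smul_eq_mul]
            ring
          rw [hcoeff] at hb
          have h1 : coeff b Q ≠ 0 := fun h => hb (by rw [h, mul_zero])
          have h2 : b ≠ a₀ := by
            rintro rfl
            exact hb (by rw [hc, sub_self, zero_mul])
          exact Finset.mem_erase.mpr ⟨h2, MvPolynomial.mem_support_iff.mpr h1⟩
        have hlt : (Dmu μ' Q - c • Q).support.card < m₀ := by
          calc (Dmu μ' Q - c • Q).support.card ≤ (Q.support.erase a₀).card :=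
                Finset.card_le_card hsupp
            _ < Q.support.card := Finset.card_erase_lt_of_mem ha₀
            _ = m₀ := hcard
        refine Nat.find_min hex hlt ⟨Dmu μ' P - c • P, Dmu μ' Q - c • Q, hQ', ?_, rfl⟩
        rw [map_sub, map_sub, mul_sub, hmain, map_smul, map_smul, mul_smul_comm, hPQ]
    refine ⟨hQhom, ?_⟩
    rw [hQhom, map_smul, mul_smul_comm, hPQ, ← map_smul] at hmain
    exact (algt_injective ψ hmain).symm
  obtain ⟨hQμ, hPμ⟩ := key μ d (d_algt d μ ψ hd) hdf
  obtain ⟨hQν, hPν⟩ := key ν e (d_algt e ν ψ he) hef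
  -- all monomials of Q and P have the weight of a₀, hence equal a₀
  have wt_eq : ∀ (μ' : ZMod n → k) (R : PR), Dmu μ' R = wt μ' a₀ • R →
      ∀ b, b ∈ R.support → wt μ' b = wt μ' a₀ := by
    intro μ' R hR b hb
    have := congrArg (coeff b) hR
    rw [coeff_Dmu, coeff_smul, smul_eq_mul] at this
    exact mul_right_cancel₀ (MvPolynomial.mem_support_iff.mp hb) this
  have hsuppQ : ∀ b ∈ Q.support, b = a₀ := fun b hb =>
    inj b a₀ (wt_eq μ Q hQμ b hb) (wt_eq ν Q hQν b hb)
  have hsuppP : ∀ b ∈ P.support, b = a₀ := fun b hb =>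
    inj b a₀ (wt_eq μ P hPμ b hb) (wt_eq ν P hPν b hb)
  have hQm : Q = monomial a₀ (coeff a₀ Q) := by
    ext b
    rw [coeff_monomial]
    split_ifs with h
    · rw [h]
    · by_contra hb
      exact h ((hsuppQ b (MvPolynomial.mem_support_iff.mpr hb)).symm)
  have hPm : P = monomial a₀ (coeff a₀ P) := by
    ext b
    rw [coeff_monomial]
    split_ifs with h
    · rw [h]
    · by_contra hb
      exact h ((hsuppP b (MvPolynomial.mem_support_iff.mpr hb)).symm)
  set q := coeff a₀ Q with hq
  set p := coeff a₀ P with hp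
  have hq0 : q ≠ 0 := MvPolynomial.mem_support_iff.mp ha₀
  have hPQ' : P = (p * q⁻¹) • Q := by
    rw [hPm, hQm, smul_monomial]
    congr 1
    rw [smul_eq_mul, mul_assoc, inv_mul_cancel₀ hq0, mul_one]
  refine ⟨p * q⁻¹, ?_⟩
  have hQF : algt ψ Q ≠ 0 := by
    rw [map_ne_zero_iff _ (algt_injective ψ)]
    exact hQ
  have : f * algt ψ Q = algebraMap k FR (p * q⁻¹) * algt ψ Q := by
    rw [hPQ, hPQ', map_smul, Algebra.smul_def]
  exact (mul_right_cancel₀ hQF this).symm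
end core



section primecase
variable {k : Type*} [Field k] [CharZero k] {n : ℕ} {ε : k}

lemma sum_zmod [NeZero n] {M : Type*} [AddCommMonoid M] (F : ZMod n → M) :
    ∑ i : ZMod n, F i = ∑ j ∈ Finset.range n, F (j : ZMod n) := by
  refine (Finset.sum_nbij' (fun (j : ℕ) => (j : ZMod n)) (fun (i : ZMod n) => i.val)
    (fun j _ => Finset.mem_univ _) (fun i _ => Finset.mem_range.mpr (ZMod.val_lt i))
    (fun j hj => ZMod.val_cast_of_lt (Finset.mem_range.mp hj))
    (fun i _ => ZMod.natCast_zmod_val i) (fun j _ => rfl)).symm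

lemma prime_rel [NeZero n] (hp : n.Prime) (hε : IsPrimitiveRoot ε n) (c : ZMod n → ℤ)
    (h1 : ∑ i : ZMod n, (c i : k) * chi ε n i = 0)
    (h2 : ∑ i : ZMod n, c i = 0) : ∀ i, c i = 0 := by
  haveI : Fact n.Prime := ⟨hp⟩
  have hεn := hε.pow_eq_one
  set c₀ : ℕ → ℤ := fun j => c (j : ZMod n) with hc₀
  have h1' : ∑ j ∈ Finset.range n, (c₀ j : k) * ε ^ j = 0 := by
    rw [sum_zmod] at h1
    rw [← h1]
    refine Finset.sum_congr rfl fun j hj => ?_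
    congr 1
    unfold chi
    rw [ZMod.val_natCast, pow_val_mod hεn]
  have h2' : ∑ j ∈ Finset.range n, c₀ j = 0 := by
    rw [sum_zmod] at h2; exact h2
  set P : Polynomial ℚ := ∑ j ∈ Finset.range n, Polynomial.C ((c₀ j : ℚ)) * Polynomial.X ^ j
    with hP
  have coeffP : ∀ j, j < n → P.coeff j = (c₀ j : ℚ) := by
    intro j hj
    rw [hP, Polynomial.finset_sum_coeff]
    simp only [Polynomial.coeff_C_mul, Polynomial.coeff_X_pow, mul_ite, mul_one, mul_zero]
    rw [Finset.sum_ite_eq (Finset.range n) j (fun i => ((c₀ i : ℚ)))]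
    simp [Finset.mem_range.mpr hj]
  have haev : Polynomial.aeval ε P = 0 := by
    rw [hP]
    simp only [map_sum, map_mul, Polynomial.aeval_C, map_pow, Polynomial.aeval_X, map_intCast]
    exact_mod_cast h1'
  have hdvd : Polynomial.cyclotomic n ℚ ∣ P := by
    rw [Polynomial.cyclotomic_eq_minpoly_rat hε hp.pos]
    exact minpoly.dvd ℚ ε haev
  have hdegP : P.natDegree ≤ n - 1 := by
    refine Polynomial.natDegree_sum_le_of_forall_le _ _ fun j hj => ?_
    refine le_trans (Polynomial.natDegree_C_mul_le _ _) ?_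
    rw [Polynomial.natDegree_X_pow]
    have := Finset.mem_range.mp hj
    omega
  have hcycdeg : (Polynomial.cyclotomic n ℚ).natDegree = n - 1 := by
    rw [Polynomial.natDegree_cyclotomic, Nat.totient_prime hp]
  have hcoeffcyc : ∀ j, j < n → (Polynomial.cyclotomic n ℚ).coeff j = 1 := by
    intro j hj
    rw [Polynomial.cyclotomic_prime ℚ n, Polynomial.finset_sum_coeff]
    simp only [Polynomial.coeff_X_pow]
    rw [Finset.sum_ite_eq (Finset.range n) j (fun _ => (1 : ℚ))]
    simp [Finset.mem_range.mpr hj]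
  obtain ⟨S, hS⟩ := hdvd
  have hall : ∀ j, j < n → (c₀ j : ℚ) = (c₀ 0 : ℚ) := by
    by_cases hS0 : S = 0
    · intro j hj
      rw [← coeffP j hj, ← coeffP 0 hp.pos, hS, hS0, mul_zero]
      simp
    · have hdegS : S.natDegree = 0 := by
        have hcyc0 : Polynomial.cyclotomic n ℚ ≠ 0 := Polynomial.cyclotomic_ne_zero n ℚ
        have := Polynomial.natDegree_mul hcyc0 hS0
        rw [← hS, hcycdeg] at this
        have h3 : 1 ≤ n := hp.pos
        omega
      obtain ⟨r, rfl⟩ := Polynomial.natDegree_eq_zero.mp hdegS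
      intro j hj
      rw [← coeffP j hj, ← coeffP 0 hp.pos, hS, Polynomial.coeff_mul_C, Polynomial.coeff_mul_C,
        hcoeffcyc j hj, hcoeffcyc 0 hp.pos]
  have hc0 : (c₀ 0 : ℚ) = 0 := by
    have hsum : ∑ j ∈ Finset.range n, (c₀ j : ℚ) = 0 := by exact_mod_cast congrArg (Int.cast : ℤ → ℚ) h2'
    rw [Finset.sum_congr rfl (fun j hj => hall j (Finset.mem_range.mp hj))] at hsum
    rw [Finset.sum_const, Finset.card_range, nsmul_eq_mul] at hsum
    have hn0 : (n : ℚ) ≠ 0 := Nat.cast_ne_zero.mpr hp.ne_zero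
    rcases mul_eq_zero.mp hsum with h | h
    · exact absurd h hn0
    · exact h
  intro i
  have : (c i : ℚ) = 0 := by
    have := hall i.val (ZMod.val_lt i)
    rw [hc0] at this
    rw [hc₀] at this
    simpa [ZMod.natCast_zmod_val] using this
  exact_mod_cast this

lemma inj_of_prime (hp : n.Prime) (hε : IsPrimitiveRoot ε n) :
    ∀ a b : ZMod n →₀ ℕ, wt (fun i => chi ε n (-i)) a = wt (fun i => chi ε n (-i)) b →
      wt (fun _ => (1 : k)) a = wt (fun _ => (1 : k)) b → a = b := by
  haveI : NeZero n := ⟨hp.ne_zero⟩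
  intro a b h1 h2
  have hwt : ∀ (μ : ZMod n → k) (x : ZMod n →₀ ℕ),
      wt μ x = ∑ i : ZMod n, (x i : k) * μ i := by
    intro μ x
    rw [wt, Finsupp.sum_fintype]
    intro i
    simp
  set c : ZMod n → ℤ := fun i => (a (-i) : ℤ) - (b (-i) : ℤ) with hc
  simp only [hwt, mul_one] at h1 h2
  have key1 : ∑ i : ZMod n, (c i : k) * chi ε n i = 0 := by
    have h0 : ∑ i : ZMod n, ((a i : k) - (b i : k)) * chi ε n (-i) = 0 := by
      simp only [sub_mul, Finset.sum_sub_distrib, h1, sub_self]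
    rw [← h0]
    refine Fintype.sum_bijective (fun i : ZMod n => -i) (neg_involutive.bijective) _ _
      fun i => ?_
    simp only [hc, neg_neg]
    push_cast
    ring
  have key2 : ∑ i : ZMod n, c i = 0 := by
    have h2' : (∑ i : ZMod n, (a i : ℤ)) = ∑ i : ZMod n, (b i : ℤ) := by
      have : ((∑ i : ZMod n, (a i : ℤ) : ℤ) : k) = ((∑ i : ZMod n, (b i : ℤ) : ℤ) : k) := by
        push_cast
        exact h2
      exact_mod_cast this
    have hb : ∑ i : ZMod n, (b (-i) : ℤ) = ∑ i : ZMod n, (b i : ℤ) :=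
      Fintype.sum_bijective (fun i : ZMod n => -i) (neg_involutive.bijective) _ _ fun i => by
        simp
    have ha : ∑ i : ZMod n, (a (-i) : ℤ) = ∑ i : ZMod n, (a i : ℤ) :=
      Fintype.sum_bijective (fun i : ZMod n => -i) (neg_involutive.bijective) _ _ fun i => by
        simp
    simp only [hc, Finset.sum_sub_distrib, ha, hb, h2', sub_self]
  have := prime_rel hp hε c key1 key2
  ext i
  have h := this (-i)
  rw [hc] at h
  simp only [neg_neg] at h
  omega
end primecase



section eigen
variable {k : Type*} [Field k] {n : ℕ} {ε : k} [NeZero n]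
local notation "PR" => MvPolynomial (ZMod n) k
local notation "FR" => FractionRing (MvPolynomial (ZMod n) k)

lemma d_alg_uu [CharZero k] (hε : IsPrimitiveRoot ε n)
    (d : Derivation k FR FR)
    (hd : ∀ j : ZMod n, d (algebraMap PR FR (X j)) = algebraMap PR FR (X (j + 1)))
    (i : ZMod n) :
    d (algebraMap PR FR (uu ε n i))
      = algebraMap k FR (chi ε n (-i)) * algebraMap PR FR (uu ε n i) := by
  have hεn := hε.pow_eq_one
  have L : d (algebraMap PR FR (uu ε n i))
      = ∑ j : ZMod n, chi ε n (i * j) • algebraMap PR FR (X (j + 1)) := by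
    have : algebraMap PR FR (uu ε n i)
        = ∑ j : ZMod n, chi ε n (i * j) • algebraMap PR FR (X j) := by
      rw [show algebraMap PR FR (uu ε n i) = (IsScalarTower.toAlgHom k PR FR) (uu ε n i)
        from rfl]
      simp only [uu, map_sum, map_smul]
      rfl
    rw [this, map_sum]
    exact Finset.sum_congr rfl fun j _ => by rw [Derivation.map_smul, hd j]
  have Rr : algebraMap k FR (chi ε n (-i)) * algebraMap PR FR (uu ε n i)
      = ∑ j : ZMod n, (chi ε n (-i) * chi ε n (i * j)) • algebraMap PR FR (X j) := by
    have : algebraMap PR FR (uu ε n i)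
        = ∑ j : ZMod n, chi ε n (i * j) • algebraMap PR FR (X j) := by
      rw [show algebraMap PR FR (uu ε n i) = (IsScalarTower.toAlgHom k PR FR) (uu ε n i)
        from rfl]
      simp only [uu, map_sum, map_smul]
      rfl
    rw [this, Finset.mul_sum]
    exact Finset.sum_congr rfl fun j _ => by
      rw [Algebra.smul_def, Algebra.smul_def, ← mul_assoc, ← map_mul]
  rw [L, Rr]
  refine Fintype.sum_bijective (fun j : ZMod n => j + 1)
    (Equiv.addRight (1 : ZMod n)).bijective _ _ fun j => ?_
  congr 1
  rw [← chi_add hεn]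
  congr 1
  ring

lemma e_alg_uu (e : Derivation k FR FR)
    (he : ∀ j : ZMod n, e (algebraMap PR FR (X j)) = algebraMap PR FR (X j))
    (i : ZMod n) :
    e (algebraMap PR FR (uu ε n i)) = algebraMap PR FR (uu ε n i) := by
  have hU : algebraMap PR FR (uu ε n i)
      = ∑ j : ZMod n, chi ε n (i * j) • algebraMap PR FR (X j) := by
    rw [show algebraMap PR FR (uu ε n i) = (IsScalarTower.toAlgHom k PR FR) (uu ε n i)
      from rfl]
    simp only [uu, map_sum, map_smul]
    rfl
  rw [hU, map_sum]
  exact Finset.sum_congr rfl fun j _ => by rw [Derivation.map_smul, he j]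

-- derivation eigenvalue helpers
variable {K : Type*} [Field K] {R : Type*}

lemma d_mul_eig {kk : Type*} [CommRing kk] [Algebra kk K] (d : Derivation kk K K)
    {x y a b : K} (hx : d x = a * x) (hy : d y = b * y) :
    d (x * y) = (a + b) * (x * y) := by
  rw [Derivation.leibniz, smul_eq_mul, smul_eq_mul, hx, hy]
  ring

lemma d_pow_eig {kk : Type*} [CommRing kk] [Algebra kk K] (d : Derivation kk K K)
    {x a : K} (hx : d x = a * x) (t : ℕ) :
    d (x ^ t) = (t : K) * a * (x ^ t) := by
  induction t with
  | zero => simp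
  | succ t ih =>
      rw [pow_succ, d_mul_eig d ih hx]
      push_cast
      ring

lemma d_prod_eig {kk : Type*} [CommRing kk] [Algebra kk K] (d : Derivation kk K K)
    {I : Type*} (s : Finset I) (x : I → K) (w : I → K)
    (h : ∀ i ∈ s, d (x i) = w i * x i) :
    d (∏ i ∈ s, x i) = (∑ i ∈ s, w i) * ∏ i ∈ s, x i := by
  classical
  induction s using Finset.induction_on with
  | empty => simp
  | insert a s' hne ih =>
      rw [Finset.prod_insert hne, Finset.sum_insert hne,
        d_mul_eig d (h a (Finset.mem_insert_self a s'))
          (ih fun i hi => h i (Finset.mem_insert_of_mem hi))]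

lemma d_inv_eig {kk : Type*} [CommRing kk] [Algebra kk K] (d : Derivation kk K K)
    {x a : K} (hx0 : x ≠ 0) (hx : d x = a * x) :
    d x⁻¹ = -a * x⁻¹ := by
  have h1 : d (x * x⁻¹) = 0 := by rw [mul_inv_cancel₀ hx0, Derivation.map_one_eq_zero]
  rw [Derivation.leibniz, smul_eq_mul, smul_eq_mul, hx] at h1
  have h2 : x * d x⁻¹ = -a := by
    have h3 : x⁻¹ * (a * x) = a := by
      rw [show x⁻¹ * (a * x) = a * (x * x⁻¹) from by ring, mul_inv_cancel₀ hx0, mul_one]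
    rw [h3] at h1
    linear_combination h1
  apply mul_left_cancel₀ hx0
  rw [h2, show x * (-a * x⁻¹) = -(a * (x * x⁻¹)) from by ring, mul_inv_cancel₀ hx0, mul_one]
end eigen





section composite
variable {k : Type*} [Field k] [CharZero k] {n : ℕ} {ε : k} [NeZero n]
local notation "PR" => MvPolynomial (ZMod n) k
local notation "FR" => FractionRing (MvPolynomial (ZMod n) k)

lemma composite_witness (hn : 3 ≤ n) (hnp : ¬ n.Prime) (hε : IsPrimitiveRoot ε n)
    (d e : Derivation k FR FR)
    (hd : ∀ j : ZMod n, d (algebraMap PR FR (X j)) = algebraMap PR FR (X (j + 1)))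
    (he : ∀ j : ZMod n, e (algebraMap PR FR (X j)) = algebraMap PR FR (X j)) :
    ∃ g : FR, d g = 0 ∧ e g = 0 ∧ g ∉ Set.range (algebraMap k FR) := by
  classical
  have hεn := hε.pow_eq_one
  haveI : Fact (1 < n) := ⟨by omega⟩
  set p := n.minFac with hpdef
  have hp : p.Prime := Nat.minFac_prime (by omega)
  have hpn : p ∣ n := Nat.minFac_dvd n
  set m := n / p with hmdef
  have hmp : m * p = n := Nat.div_mul_cancel hpn
  have hplt : p < n := by
    have hple : p ≤ n := Nat.le_of_dvd (by omega) hpn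
    rcases eq_or_lt_of_le hple with h | h
    · exact absurd (h ▸ hp) hnp
    · exact h
  have hp2 : 2 ≤ p := hp.two_le
  have hm2 : 2 ≤ m := by
    rcases Nat.lt_or_ge m 2 with h | h
    · interval_cases m <;> omega
    · exact h
  have hm0 : 0 < m := by omega
  have hmlt : m < n := by nlinarith
  set S : Finset (ZMod n) := Finset.univ.filter (fun i : ZMod n => m ∣ i.val) with hSdef
  set T : Finset (ZMod n) := Finset.univ.filter (fun i : ZMod n => ¬ m ∣ i.val) with hTdef
  -- transfer sums over S to sums over `range p`
  have hvalmj : ∀ j, j < p → ((m * j : ℕ) : ZMod n).val = m * j := by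
    intro j hj
    rw [ZMod.val_natCast]
    exact Nat.mod_eq_of_lt (by nlinarith)
  have hSbij : ∀ (F : ZMod n → k),
      ∑ i ∈ S, F i = ∑ j ∈ Finset.range p, F ((m * j : ℕ) : ZMod n) := by
    intro F
    refine (Finset.sum_nbij' (fun (j : ℕ) => ((m * j : ℕ) : ZMod n)) (fun i => i.val / m)
      ?_ ?_ ?_ ?_ ?_).symm
    · intro j hj
      rw [hSdef, Finset.mem_filter]
      exact ⟨Finset.mem_univ _, by rw [hvalmj j (Finset.mem_range.mp hj)]; exact ⟨j, rfl⟩⟩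
    · intro i hi
      rw [hSdef, Finset.mem_filter] at hi
      rw [Finset.mem_range]
      rw [Nat.div_lt_iff_lt_mul hm0]
      have h1 := ZMod.val_lt i
      have h2 : p * m = n := by rw [mul_comm]; exact hmp
      omega
    · intro j hj
      show ((m * j : ℕ) : ZMod n).val / m = j
      rw [hvalmj j (Finset.mem_range.mp hj)]
      exact Nat.mul_div_cancel_left j hm0
    · intro i hi
      rw [hSdef, Finset.mem_filter] at hi
      show ((m * (i.val / m) : ℕ) : ZMod n) = i
      rw [Nat.mul_div_cancel' hi.2, ZMod.natCast_zmod_val]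
    · intro j _
      rfl
  have hScard : S.card = p := by
    rw [← Finset.card_range p]
    refine Finset.card_nbij' (fun i => i.val / m) (fun (j : ℕ) => ((m * j : ℕ) : ZMod n))
      ?_ ?_ ?_ ?_
    · intro i hi
      simp only [Finset.mem_coe] at hi ⊢
      rw [hSdef, Finset.mem_filter] at hi
      rw [Finset.mem_range]
      rw [Nat.div_lt_iff_lt_mul hm0]
      have h1 := ZMod.val_lt i
      have h2 : p * m = n := by rw [mul_comm]; exact hmp
      omega
    · intro j hj
      simp only [Finset.mem_coe] at hj ⊢
      rw [hSdef, Finset.mem_filter]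
      exact ⟨Finset.mem_univ _, by rw [hvalmj j (Finset.mem_range.mp hj)]; exact ⟨j, rfl⟩⟩
    · intro i hi
      simp only [Finset.mem_coe] at hi ⊢
      rw [hSdef, Finset.mem_filter] at hi
      show ((m * (i.val / m) : ℕ) : ZMod n) = i
      rw [Nat.mul_div_cancel' hi.2, ZMod.natCast_zmod_val]
    · intro j hj
      simp only [Finset.mem_coe] at hj ⊢
      show ((m * j : ℕ) : ZMod n).val / m = j
      rw [hvalmj j (Finset.mem_range.mp hj)]
      exact Nat.mul_div_cancel_left j hm0
  have hSsum : ∑ i ∈ S, chi ε n i = 0 := by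
    rw [hSbij (chi ε n)]
    have : ∀ j ∈ Finset.range p, chi ε n ((m * j : ℕ) : ZMod n) = (ε ^ m) ^ j := by
      intro j hj
      unfold chi
      rw [hvalmj j (Finset.mem_range.mp hj), pow_mul]
    rw [Finset.sum_congr rfl this]
    have hne1 : ε ^ m ≠ 1 := hε.pow_ne_one_of_pos_of_lt hm0.ne' hmlt
    rw [geom_sum_eq hne1]
    rw [← pow_mul, hmp, hεn, sub_self, zero_div]
  have hTotal : ∑ i : ZMod n, chi ε n i = 0 := by
    have := chi_sum_eq hε 1
    simp only [mul_one] at this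
    rw [this, if_neg one_ne_zero]
  have hTsum : ∑ i ∈ T, chi ε n i = 0 := by
    have hsplit := Finset.sum_filter_add_sum_filter_not Finset.univ
      (fun i : ZMod n => m ∣ i.val) (chi ε n)
    rw [← hSdef, ← hTdef] at hsplit
    rw [hTotal, hSsum, zero_add] at hsplit
    exact hsplit
  -- negation-closure
  have hnegdvd : ∀ i : ZMod n, m ∣ i.val → m ∣ (-i).val := by
    intro i hi
    have hmn : m ∣ n := ⟨p, hmp.symm⟩
    rcases eq_or_ne i 0 with rfl | h0
    · simpa using hi
    · haveI : NeZero i := ⟨h0⟩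
      rw [ZMod.val_neg_of_ne_zero]
      exact (Nat.dvd_sub hmn hi)
  have hSneg : ∑ i ∈ S, chi ε n (-i) = 0 := by
    rw [show ∑ i ∈ S, chi ε n (-i) = ∑ i ∈ S, chi ε n i from ?_]
    · exact hSsum
    · refine Finset.sum_nbij' (fun i => -i) (fun i => -i) ?_ ?_ ?_ ?_ ?_
      · intro i hi
        rw [hSdef, Finset.mem_filter] at hi ⊢
        exact ⟨Finset.mem_univ _, hnegdvd i hi.2⟩
      · intro i hi
        rw [hSdef, Finset.mem_filter] at hi ⊢
        exact ⟨Finset.mem_univ _, hnegdvd i hi.2⟩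
      · intro i _; exact neg_neg i
      · intro i _; exact neg_neg i
      · intro i _; rfl
  have hTneg : ∑ i ∈ T, chi ε n (-i) = 0 := by
    rw [show ∑ i ∈ T, chi ε n (-i) = ∑ i ∈ T, chi ε n i from ?_]
    · exact hTsum
    · refine Finset.sum_nbij' (fun i => -i) (fun i => -i) ?_ ?_ ?_ ?_ ?_
      · intro i hi
        rw [hTdef, Finset.mem_filter] at hi ⊢
        refine ⟨Finset.mem_univ _, fun hdvd => hi.2 ?_⟩
        have := hnegdvd (-i) hdvd
        rwa [neg_neg] at this
      · intro i hi
        rw [hTdef, Finset.mem_filter] at hi ⊢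
        refine ⟨Finset.mem_univ _, fun hdvd => hi.2 ?_⟩
        have := hnegdvd (-i) hdvd
        rwa [neg_neg] at this
      · intro i _; exact neg_neg i
      · intro i _; exact neg_neg i
      · intro i _; rfl
  have hTcard : T.card = n - p := by
    have := Finset.card_filter_add_card_filter_not (s := Finset.univ)
      (p := fun i : ZMod n => m ∣ i.val)
    rw [Finset.card_univ, ZMod.card] at this
    rw [← hSdef, ← hTdef] at this
    omega
  -- the witness
  set U : ZMod n → FR := fun i => algebraMap PR FR (uu ε n i) with hUdef
  have hU0 : ∀ i, U i ≠ 0 := by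
    intro i
    rw [hUdef]
    simp only
    rw [map_ne_zero_iff _ (IsFractionRing.injective PR FR)]
    exact uu_ne_zero hε i
  have hdU : ∀ i, d (U i) = algebraMap k FR (chi ε n (-i)) * U i := fun i => d_alg_uu hε d hd i
  have heU : ∀ i, e (U i) = (1 : FR) * U i := fun i => by rw [one_mul]; exact e_alg_uu e he i
  set N : FR := ∏ i ∈ S, U i ^ (n - p) with hNdef
  set M : FR := ∏ i ∈ T, U i ^ p with hMdef
  have hN0 : N ≠ 0 := Finset.prod_ne_zero_iff.mpr fun i _ => pow_ne_zero _ (hU0 i)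
  have hM0 : M ≠ 0 := Finset.prod_ne_zero_iff.mpr fun i _ => pow_ne_zero _ (hU0 i)
  have hdN : d N = 0 := by
    rw [hNdef, d_prod_eig d S _ (fun i => ((n - p : ℕ) : FR) * algebraMap k FR (chi ε n (-i)))
      (fun i _ => d_pow_eig d (hdU i) (n - p))]
    have : ∑ i ∈ S, ((n - p : ℕ) : FR) * algebraMap k FR (chi ε n (-i)) = 0 := by
      rw [← Finset.mul_sum, ← map_sum, hSneg, map_zero, mul_zero]
    rw [this, zero_mul]
  have hdM : d M = 0 := by
    rw [hMdef, d_prod_eig d T _ (fun i => ((p : ℕ) : FR) * algebraMap k FR (chi ε n (-i)))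
      (fun i _ => d_pow_eig d (hdU i) p)]
    have : ∑ i ∈ T, ((p : ℕ) : FR) * algebraMap k FR (chi ε n (-i)) = 0 := by
      rw [← Finset.mul_sum, ← map_sum, hTneg, map_zero, mul_zero]
    rw [this, zero_mul]
  set c : FR := ((n - p : ℕ) : FR) * ((p : ℕ) : FR) with hcdef
  have heN : e N = c * N := by
    rw [hNdef, d_prod_eig e S _ (fun i => ((n - p : ℕ) : FR) * 1)
      (fun i _ => d_pow_eig e (heU i) (n - p))]
    rw [Finset.sum_const, hScard, nsmul_eq_mul, hcdef]
    try ring_nf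
    try ring
  have heM : e M = c * M := by
    rw [hMdef, d_prod_eig e T _ (fun i => ((p : ℕ) : FR) * 1)
      (fun i _ => d_pow_eig e (heU i) p)]
    rw [Finset.sum_const, hTcard, nsmul_eq_mul, hcdef]
    try ring_nf
    try ring
  refine ⟨N * M⁻¹, ?_, ?_, ?_⟩
  · rw [Derivation.leibniz, smul_eq_mul, smul_eq_mul, hdN,
      d_inv_eig d hM0 (show d M = 0 * M by rw [hdM, zero_mul])]
    ring
  · rw [Derivation.leibniz, smul_eq_mul, smul_eq_mul, heN, d_inv_eig e hM0 heM]
    ring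
  · rintro ⟨c0, hc0⟩
    have hNM : N = algebraMap k FR c0 * M := by
      have : algebraMap k FR c0 * M * M⁻¹ = N * M⁻¹ * M * M⁻¹ := by
        rw [hc0]
      field_simp at this
      rw [this]
    set PN : PR := ∏ i ∈ S, uu ε n i ^ (n - p) with hPNdef
    set PM : PR := ∏ i ∈ T, uu ε n i ^ p with hPMdef
    have hNalg : N = algebraMap PR FR PN := by
      rw [hNdef, hPNdef, map_prod]
      exact Finset.prod_congr rfl fun i _ => by rw [map_pow]
    have hMalg : M = algebraMap PR FR PM := by
      rw [hMdef, hPMdef, map_prod]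
      exact Finset.prod_congr rfl fun i _ => by rw [map_pow]
    have hPoly : PN = C c0 * PM := by
      apply IsFractionRing.injective PR FR
      rw [map_mul, ← hNalg, ← hMalg, hNM]
      congr 1
    have hXeq : (∏ i ∈ S, (X i : PR) ^ (n - p)) = C c0 * ∏ i ∈ T, (X i : PR) ^ p := by
      have := congrArg (psiA hε).symm hPoly
      rw [map_mul, map_prod, map_prod] at this
      have hsymm : ∀ i : ZMod n, (psiA hε).symm (uu ε n i) = X i := by
        intro i
        rw [← psiA_X hε i, AlgEquiv.symm_apply_apply]
      have hC : (psiA hε).symm (C c0) = C c0 := by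
        have : (C c0 : PR) = algebraMap k PR c0 := rfl
        rw [this, AlgEquiv.commutes]
      simp only [map_pow, hsymm, hC] at this
      exact this
    -- evaluate at the indicator point
    set w : ZMod n → k := fun i => if m ∣ i.val then (1 : k) else 0 with hwdef
    have hL : eval w (∏ i ∈ S, (X i : PR) ^ (n - p)) = 1 := by
      rw [eval_prod]
      refine Finset.prod_eq_one fun i hi => ?_
      rw [hSdef, Finset.mem_filter] at hi
      rw [eval_pow, eval_X, hwdef]
      simp only [hi.2, if_true]
      exact one_pow _
    have hR : eval w (C c0 * ∏ i ∈ T, (X i : PR) ^ p) = 0 := by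
      rw [eval_mul, eval_prod]
      have h1T : (1 : ZMod n) ∈ T := by
        rw [hTdef, Finset.mem_filter]
        refine ⟨Finset.mem_univ _, ?_⟩
        rw [ZMod.val_one]
        intro hdvd
        have := Nat.le_of_dvd (by omega) hdvd
        omega
      have : eval w ((X (1 : ZMod n) : PR) ^ p) = 0 := by
        rw [eval_pow, eval_X, hwdef]
        simp only
        rw [if_neg]
        · exact zero_pow hp.ne_zero
        · rw [ZMod.val_one]
          intro hdvd
          have := Nat.le_of_dvd (by omega) hdvd
          omega
      rw [Finset.prod_eq_zero h1T this, mul_zero]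
    rw [hXeq, hR] at hL
    exact one_ne_zero hL.symm
end composite



/-- `k(X)^d ∩ k(X)^E = k` if and only if `n` is prime, where `d` is the
cyclotomic derivation (`d(x_j) = x_{j+1}`) and `E` the Euler derivation (`E(x_j) = x_j`)
of `k(X) = k(x_0,…,x_{n-1})`, indices mod `n`. -/
theorem stmt_9 {k : Type*} [Field k] [CharZero k] (n : ℕ) (hn : 3 ≤ n)
    (ε : k) (hε : IsPrimitiveRoot ε n)
    (d E : Derivation k (FractionRing (MvPolynomial (ZMod n) k))
      (FractionRing (MvPolynomial (ZMod n) k)))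
    (hd : ∀ j : ZMod n,
      d (algebraMap (MvPolynomial (ZMod n) k) (FractionRing (MvPolynomial (ZMod n) k)) (X j))
        = algebraMap (MvPolynomial (ZMod n) k) (FractionRing (MvPolynomial (ZMod n) k))
            (X (j + 1)))
    (hE : ∀ j : ZMod n,
      E (algebraMap (MvPolynomial (ZMod n) k) (FractionRing (MvPolynomial (ZMod n) k)) (X j))
        = algebraMap (MvPolynomial (ZMod n) k) (FractionRing (MvPolynomial (ZMod n) k)) (X j)) :
    ({f : FractionRing (MvPolynomial (ZMod n) k) | d f = 0}
        ∩ {f : FractionRing (MvPolynomial (ZMod n) k) | E f = 0}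
      = Set.range (algebraMap k (FractionRing (MvPolynomial (ZMod n) k))))
      ↔ n.Prime := by
  haveI : NeZero n := ⟨by omega⟩
  constructor
  · intro hset
    by_contra hnp
    obtain ⟨g, hdg, heg, hg⟩ := composite_witness hn hnp hε d E hd hE
    apply hg
    rw [← hset]
    exact ⟨hdg, heg⟩
  · intro hp
    apply Set.Subset.antisymm
    · rintro f ⟨h1, h2⟩
      have hd' : ∀ i, d (algt (psiA hε) (X i))
          = algebraMap k (FractionRing (MvPolynomial (ZMod n) k)) (chi ε n (-i))
            * algt (psiA hε) (X i) := by
        intro i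
        have h : algt (psiA hε) (X i)
            = algebraMap (MvPolynomial (ZMod n) k) (FractionRing (MvPolynomial (ZMod n) k))
              (uu ε n i) := by
          simp [algt]
        rw [h]
        exact d_alg_uu hε d hd i
      have hE' : ∀ i, E (algt (psiA hε) (X i))
          = algebraMap k (FractionRing (MvPolynomial (ZMod n) k)) (1 : k)
            * algt (psiA hε) (X i) := by
        intro i
        have h : algt (psiA hε) (X i)
            = algebraMap (MvPolynomial (ZMod n) k) (FractionRing (MvPolynomial (ZMod n) k))
              (uu ε n i) := by
          simp [algt]
        rw [h, map_one, one_mul]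
        exact e_alg_uu E hE i
      exact core (psiA hε) (fun i => chi ε n (-i)) (fun _ => (1 : k)) d E hd' hE'
        (inj_of_prime hp hε) f h1 h2
    · rintro f ⟨c, rfl⟩
      exact ⟨Derivation.map_algebraMap d c, Derivation.map_algebraMap E c⟩
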